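/- For every real k > 0, the function f(x) := (1 + (1 + x)^(−k/x))/(2 + x) is strictly decreasing on the interval (0, k]. -/

import Mathlib

open Real Set

lemma key_ineq {x : ℝ} (hx : 0 < x) :
    (1 + x) * (2 + x) * Real.log (1 + x) < x * (2 + x) + x ^ 2 * (1 + x) := by
  set h : ℝ → ℝ := fun t => t * (2 + t) + t ^ 2 * (1 + t) - (1 + t) * (2 + t) * Real.log (1 + t)
    with hh
  have hlogc : ContinuousOn (fun t : ℝ => Real.log (1 + t)) (Set.Ici 0) := by
    apply Real.continuousOn_log.comp (by fun_prop)
    intro t ht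
    simp only [Set.mem_compl_iff, Set.mem_singleton_iff]
    have : (0:ℝ) ≤ t := ht
    intro hc; nlinarith [hc]
  have hmono : StrictMonoOn h (Set.Ici (0:ℝ)) := by
    apply strictMonoOn_of_deriv_pos (convex_Ici 0)
    · apply ContinuousOn.sub (by fun_prop)
      exact ContinuousOn.mul (by fun_prop) hlogc
    · intro y hy
      rw [interior_Ici] at hy
      have hy0 : (0:ℝ) < y := hy
      have h1y : (0:ℝ) < 1 + y := by linarith
      have hd : HasDerivAt h (3*y*(1+y) - (3+2*y) * Real.log (1+y)) y := by
        have hlog : HasDerivAt (fun t : ℝ => Real.log (1 + t)) (1/(1+y)) y := by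
          simpa using ((hasDerivAt_id y).const_add 1).log h1y.ne'
        have hpoly : HasDerivAt (fun t : ℝ => t * (2 + t) + t ^ 2 * (1 + t))
            (2 + 4*y + 3*y^2) y := by
          have : HasDerivAt (fun t : ℝ => t * (2 + t) + t ^ 2 * (1 + t))
              (1 * (2 + y) + y * 1 + (2 * y ^ 1 * (1 + y) + y ^ 2 * 1)) y := by
            exact ((hasDerivAt_id y).mul ((hasDerivAt_id y).const_add 2)).add
              (((hasDerivAt_pow 2 y)).mul ((hasDerivAt_id y).const_add 1))
          convert this using 1; ring
        have hprod : HasDerivAt (fun t : ℝ => (1 + t) * (2 + t) * Real.log (1 + t))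
            ((3 + 2*y) * Real.log (1+y) + (2 + y)) y := by
          have hq : HasDerivAt (fun t : ℝ => (1 + t) * (2 + t)) (3 + 2*y) y := by
            have : HasDerivAt (fun t : ℝ => (1 + t) * (2 + t)) (1 * (2 + y) + (1 + y) * 1) y :=
              ((hasDerivAt_id y).const_add 1).mul ((hasDerivAt_id y).const_add 2)
            convert this using 1; ring
          have : HasDerivAt (fun t : ℝ => (1 + t) * (2 + t) * Real.log (1 + t))
              ((3 + 2*y) * Real.log (1+y) + (1 + y) * (2 + y) * (1/(1+y))) y := hq.mul hlog
          convert this using 1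
          field_simp
        have : HasDerivAt h
            (2 + 4*y + 3*y^2 - ((3 + 2*y) * Real.log (1+y) + (2 + y))) y := hpoly.sub hprod
        convert this using 1
        ring
      rw [hd.deriv]
      have hlt : Real.log (1 + y) < y := by
        have := Real.log_lt_sub_one_of_pos h1y (by linarith)
        linarith
      nlinarith [hlt, hy0]
  have h0 : h 0 = 0 := by simp [hh]
  have := hmono (Set.self_mem_Ici) (Set.mem_Ici.mpr hx.le) hx
  rw [h0] at this
  simp only [hh] at this
  linarith

theorem f_strictly_decreasing (k : ℝ) (hk : 0 < k) :
    StrictAntiOn (fun x : ℝ => (1 + (1 + x) ^ (-(k / x))) / (2 + x))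
      (Set.Ioc (0 : ℝ) k) := by
  apply strictAntiOn_of_deriv_neg (convex_Ioc 0 k)
  · apply ContinuousOn.div
    · apply ContinuousOn.add continuousOn_const
      apply ContinuousOn.rpow (by fun_prop)
      · apply ContinuousOn.neg
        apply ContinuousOn.div continuousOn_const continuousOn_id
        intro t ht; exact ne_of_gt ht.1
      · intro t ht; left; have := ht.1; intro hc; nlinarith [hc]
    · fun_prop
    · intro t ht; have := ht.1; intro hc; nlinarith [hc]
  · intro x hx
    rw [interior_Ioc] at hx
    obtain ⟨hx0, hxk⟩ := hx
    have h1x : (0:ℝ) < 1 + x := by linarith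
    have h2x : (0:ℝ) < 2 + x := by linarith
    -- derivative of the exponent
    have hlog : HasDerivAt (fun y : ℝ => Real.log (1 + y)) (1/(1+x)) x := by
      simpa using ((hasDerivAt_id x).const_add 1).log h1x.ne'
    have hinv : HasDerivAt (fun y : ℝ => -(k / y)) (k / x^2) x := by
      have h := ((hasDerivAt_inv hx0.ne').const_mul k).neg
      simpa [div_eq_mul_inv, Pi.neg_def] using h
    have hv : HasDerivAt (fun y : ℝ => Real.log (1 + y) * (-(k / y)))
        (1/(1+x) * (-(k/x)) + Real.log (1+x) * (k/x^2)) x := hlog.mul hinv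
    set v' : ℝ := 1/(1+x) * (-(k/x)) + Real.log (1+x) * (k/x^2) with hv'def
    set E : ℝ := Real.exp (Real.log (1+x) * (-(k/x))) with hEdef
    have hg : HasDerivAt (fun y : ℝ => Real.exp (Real.log (1 + y) * (-(k / y)))) (E * v') x :=
      hv.exp
    have hden : HasDerivAt (fun y : ℝ => 2 + y) 1 x := (hasDerivAt_id x).const_add 2
    have hf2 : HasDerivAt (fun y : ℝ => (1 + Real.exp (Real.log (1 + y) * (-(k / y)))) / (2 + y))
        ((E * v' * (2 + x) - (1 + E) * 1) / (2 + x)^2) x :=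
      (hg.const_add 1).div hden h2x.ne'
    have heq : (fun y : ℝ => (1 + (1 + y) ^ (-(k / y))) / (2 + y)) =ᶠ[nhds x]
        (fun y : ℝ => (1 + Real.exp (Real.log (1 + y) * (-(k / y)))) / (2 + y)) := by
      filter_upwards [eventually_gt_nhds hx0] with y hy
      rw [Real.rpow_def_of_pos (by linarith)]
    have hf' : HasDerivAt (fun y : ℝ => (1 + (1 + y) ^ (-(k / y))) / (2 + y))
        ((E * v' * (2 + x) - (1 + E) * 1) / (2 + x)^2) x :=
      hf2.congr_of_eventuallyEq heq
    rw [hf'.deriv]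
    apply div_neg_of_neg_of_pos _ (by positivity)
    -- show numerator negative
    have hE : 0 < E := Real.exp_pos _
    -- v' * (2+x) < k from the key inequality
    have hv'k : v' * (2 + x) < k := by
      have hkey := key_ineq hx0
      have hv'eq : v' = k * ((1+x) * Real.log (1+x) - x) / (x^2 * (1+x)) := by
        rw [hv'def]; field_simp; ring
      rw [hv'eq, div_mul_eq_mul_div, div_lt_iff₀ (by positivity)]
      nlinarith [mul_lt_mul_of_pos_left hkey hk]
    -- Bernoulli: E⁻¹ = (1+x)^(k/x) ≥ 1 + k
    have hEinv : 1 + k ≤ E⁻¹ := by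
      have hb := one_add_mul_self_le_rpow_one_add (s := x) (by linarith)
        (p := k/x) ((one_le_div hx0).mpr hxk.le)
      have h1 : k / x * x = k := by field_simp
      have h2 : (1 + x) ^ (k/x) = E⁻¹ := by
        rw [hEdef, Real.rpow_def_of_pos h1x, ← Real.exp_neg]
        ring_nf
      rw [h1, h2] at hb
      exact hb
    have hEk : E * k ≤ 1 - E := by
      have := mul_le_mul_of_nonneg_left hEinv hE.le
      rw [mul_inv_cancel₀ hE.ne'] at this
      nlinarith
    have h1 : E * (v' * (2 + x)) < E * k := mul_lt_mul_of_pos_left hv'k hE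
    nlinarith
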